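/- arXiv:2206.09035 — 2 statements merged into one kernel-verified Lean document; each statement's English description precedes it below -/
import Mathlib

section
/- (Key step in the proof of the paper's Lemma 'countable, 0'.) Assume the Krull dimension of D is at least 1. Then no nonzero K-vector space is countably generated as a D-module; in particular, the fraction field K itself is not countably generated as a D-module. -/
universe v

open Submodule Pointwise

private lemma countable_lists {M : Type*} {s : Set M} (hs : s.Countable) :
    {l : List M | ∀ x ∈ l, x ∈ s}.Countable := by
  haveI := hs.to_subtype
  refine (Set.countable_range fun l : List s => l.map Subtype.val).mono ?_
  intro l
  induction l with
  | nil => exact fun _ => ⟨[], rfl⟩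
  | cons a t ih =>
    intro hl
    obtain ⟨t', ht'⟩ := ih fun x hx => hl x (List.mem_cons_of_mem a hx)
    exact ⟨⟨a, hl a (List.mem_cons_self)⟩ :: t', by simpa using congrArg (List.cons a) ht'⟩

private lemma transcendental_of_nonunit {D : Type} [CommRing D] [IsDomain D] [Algebra ℂ D]
    {t : D} (h0 : t ≠ 0) (hu : ¬IsUnit t) : Transcendental ℂ t := by
  intro halg
  obtain ⟨p, hp, hpt⟩ := halg
  have hsplits : Polynomial.Splits p := IsAlgClosed.splits p
  have heq := congrArg (Polynomial.aeval t) (hsplits.eq_prod_roots)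
  rw [hpt, map_mul, Polynomial.aeval_C, map_multiset_prod, Multiset.map_map] at heq
  have hlc : algebraMap ℂ D p.leadingCoeff ≠ 0 := by
    simpa using (algebraMap ℂ D).injective.ne (Polynomial.leadingCoeff_ne_zero.mpr hp)
  have hprod : (Multiset.map (fun a => Polynomial.aeval t (Polynomial.X - Polynomial.C a))
      p.roots).prod = 0 := by
    rcases mul_eq_zero.mp heq.symm with h | h
    · exact absurd h hlc
    · exact h
  have hmem := Multiset.prod_eq_zero_iff.mp hprod
  obtain ⟨a, _, ha0⟩ := Multiset.mem_map.mp hmem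
  rw [map_sub, Polynomial.aeval_X, Polynomial.aeval_C, sub_eq_zero] at ha0
  rcases eq_or_ne a 0 with rfl | ha
  · exact h0 (by rw [ha0, map_zero])
  · exact hu (ha0 ▸ (IsUnit.mk0 a ha).map (algebraMap ℂ D))

private lemma key (D : Type) [CommRing D] [IsDomain D] [Algebra ℂ D]
    (hft : Algebra.FiniteType ℂ D) (hdim : 1 ≤ ringKrullDim D)
    (V : Type v) [AddCommGroup V] [Module (FractionRing D) V] [Module D V]
    [IsScalarTower D (FractionRing D) V] (hV : Nontrivial V) :
    ¬ ∃ S : Set V, S.Countable ∧ Submodule.span D S = ⊤ := by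
  rintro ⟨S, hSc, hSspan⟩
  have hnf : ¬IsField D := fun h => by
    rw [ringKrullDim_eq_zero_of_isField h] at hdim
    norm_num at hdim
  obtain ⟨t, ht0, htu⟩ := Ring.exists_not_isUnit_of_not_isField hnf
  have htr : Transcendental ℂ t := transcendental_of_nonunit ht0 htu
  set K := FractionRing D with hK
  letI : Module ℂ V := Module.compHom V (algebraMap ℂ D)
  haveI : IsScalarTower ℂ D V := ⟨fun c d w => by
    rw [Algebra.smul_def, mul_smul]; rfl⟩
  have htrK : Transcendental ℂ (algebraMap D K t) :=
    (transcendental_algebraMap_iff (IsFractionRing.injective D K)).mpr htr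
  have hliK : LinearIndependent ℂ fun c : ℂ => (algebraMap D K t - algebraMap ℂ K c)⁻¹ :=
    htrK.linearIndependent_sub_inv
  obtain ⟨w, hw⟩ := exists_ne (0 : V)
  let φ : K →ₗ[ℂ] V :=
    { toFun := fun x => x • w
      map_add' := fun x y => add_smul x y w
      map_smul' := fun c x => by
        show (c • x) • w = c • (x • w)
        rw [Algebra.smul_def, mul_smul, IsScalarTower.algebraMap_apply ℂ D K,
          algebraMap_smul]
        rfl }
  have hinj : Function.Injective φ := by
    intro x y hxy
    by_contra hne
    have hs : (x - y) • w = 0 := by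
      rw [sub_smul, sub_eq_zero]; exact hxy
    have hw0 : w = 0 := by
      have h2 := congrArg (fun u => (x - y)⁻¹ • u) hs
      simpa [smul_smul, inv_mul_cancel₀ (sub_ne_zero.mpr hne)] using h2
    exact hw hw0
  have hliV : LinearIndependent ℂ
      (φ ∘ fun c : ℂ => (algebraMap D K t - algebraMap ℂ K c)⁻¹) :=
    hliK.map' φ (LinearMap.ker_eq_bot.mpr hinj)
  obtain ⟨s, hs⟩ := hft.out
  have hTspan : span ℂ ((Submonoid.closure (↑s : Set D) : Submonoid D) : Set D) = ⊤ := by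
    rw [← Algebra.adjoin_eq_span, hs]
    rfl
  have hTc : ((Submonoid.closure (↑s : Set D) : Submonoid D) : Set D).Countable := by
    rw [Submonoid.closure_eq_image_prod]
    exact (countable_lists s.countable_toSet).image _
  have hspanC : span ℂ (((Submonoid.closure (↑s : Set D) : Submonoid D) : Set D) • S) = ⊤ := by
    rw [Submodule.span_smul_of_span_eq_top hTspan S, hSspan]
    rfl
  have hTSc : ((((Submonoid.closure (↑s : Set D) : Submonoid D) : Set D)) • S).Countable := by
    rw [← Set.image2_smul]
    exact hTc.image2 hSc _
  have hrank : Module.rank ℂ V ≤ Cardinal.aleph0 := by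
    have h1 := rank_span_le (R := ℂ)
      ((((Submonoid.closure (↑s : Set D) : Submonoid D) : Set D)) • S)
    rw [hspanC, rank_top] at h1
    exact h1.trans (Cardinal.mk_le_aleph0_iff.mpr (Set.countable_coe_iff.mpr hTSc))
  have h2 := hliV.cardinal_lift_le_rank
  have h3 : Cardinal.lift.{v} (Cardinal.mk ℂ) ≤ Cardinal.aleph0 :=
    h2.trans ((Cardinal.lift_le.mpr hrank).trans_eq Cardinal.lift_aleph0)
  have h4 : Cardinal.mk ℂ ≤ Cardinal.aleph0 := Cardinal.lift_le_aleph0.mp h3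
  rw [Cardinal.mk_complex] at h4
  exact Cardinal.aleph0_lt_continuum.not_ge h4

theorem statement2 (D : Type) [CommRing D] [IsDomain D] [Algebra ℂ D]
    (hft : Algebra.FiniteType ℂ D)
    (hdim : 1 ≤ ringKrullDim D) :
    (∀ (V : Type v) [AddCommGroup V] [Module (FractionRing D) V] [Module D V]
        [IsScalarTower D (FractionRing D) V], Nontrivial V →
      ¬ ∃ S : Set V, S.Countable ∧ Submodule.span D S = ⊤) ∧
    ¬ ∃ S : Set (FractionRing D), S.Countable ∧ Submodule.span D S = ⊤ := by
  refine ⟨fun V _ _ _ _ hV => key D hft hdim V hV, ?_⟩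
  exact key D hft hdim (FractionRing D) inferInstance
end

section
/- (Key algebraic step in the proof of the paper's main theorem for adjoint groups, combining Proposition 'A_G commutative' with the Pittie–Steinberg theorem to conclude 𝒜_G ≅ ℂ[T^∨ ⫽ W].) Suppose that for some integer n ≥ 1 there is an isomorphism of A-modules between B^⊕n and A^⊕n. Then the structure ring homomorphism A → B is bijective; in particular B is isomorphic to A as an A-algebra. -/
/-!
Statement 7 (key algebraic step in the proof of the paper's main theorem for adjoint
groups, combining Proposition "A_G commutative" with the Pittie–Steinberg theorem to
conclude `𝒜_G ≅ ℂ[T^∨ ⫽ W]`).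

If `B` is a commutative `A`-algebra such that `B^⊕n ≅ A^⊕n` as `A`-modules for some
`n ≥ 1`, then the structure homomorphism `A → B` is bijective; in particular `B ≅ A`
as `A`-algebras.
-/

set_option maxHeartbeats 1000000 in
set_option synthInstance.maxHeartbeats 400000 in
open TensorProduct in
lemma statement7_aux (A : Type*) (B : Type*) [CommRing A] [CommRing B] [Algebra A B]
    (n : ℕ) (hn : 1 ≤ n) (e : (Fin n → B) ≃ₗ[A] (Fin n → A)) [Module.Finite A B]
    (m : Ideal A) [m.IsMaximal] :
    LinearMap.range (Algebra.linearMap A B) ⊔ m • (⊤ : Submodule A B) = ⊤ := by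
  letI : Field (A ⧸ m) := Ideal.Quotient.field m
  let κ := A ⧸ m
  -- base change the isomorphism to the residue field κ
  let e₁ : (Fin n → κ ⊗[A] B) ≃ₗ[κ] (Fin n → κ ⊗[A] A) :=
    (TensorProduct.piRight A κ κ (fun _ : Fin n => B)).symm ≪≫ₗ
      (e.baseChange A κ _ _) ≪≫ₗ TensorProduct.piRight A κ κ (fun _ : Fin n => A)
  let e₂ : (Fin n → κ ⊗[A] B) ≃ₗ[κ] (Fin n → κ) :=
    e₁ ≪≫ₗ LinearEquiv.piCongrRight
      (fun _ => TensorProduct.AlgebraTensorModule.rid A κ κ)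
  have hfd : FiniteDimensional κ (κ ⊗[A] B) := Module.Finite.base_change A κ B
  haveI hfree : ∀ _ : Fin n, Module.Free κ (κ ⊗[A] B) := fun _ => inferInstance
  have hrank : Module.finrank κ (κ ⊗[A] B) = 1 := by
    have h1 : Module.finrank κ (Fin n → κ ⊗[A] B) = n * Module.finrank κ (κ ⊗[A] B) := by
      simp [Module.finrank_pi_fintype, Finset.sum_const, Finset.card_univ, Fintype.card_fin, mul_comm]
    have h2 : Module.finrank κ (Fin n → κ ⊗[A] B) = n := by
      rw [e₂.finrank_eq, Module.finrank_pi]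
      exact Fintype.card_fin n
    have := h1.symm.trans h2
    have hn0 : n ≠ 0 := by omega
    nlinarith [Nat.le_of_eq this, this]
  have hnt : Nontrivial (κ ⊗[A] B) := by
    apply Module.nontrivial_of_finrank_pos (R := κ)
    omega
  -- since `κ ⊗ B` is a 1-dimensional `κ`-algebra, it is spanned by `1`
  have hone : (1 : κ ⊗[A] B) ≠ 0 := one_ne_zero
  have hspan : (Submodule.span κ {(1 : κ ⊗[A] B)}) = ⊤ := by
    apply Submodule.eq_top_of_finrank_eq
    rw [finrank_span_singleton hone, hrank]
  -- transfer to the quotient `B ⧸ m • ⊤`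
  rw [eq_top_iff]
  rintro b -
  have hb : ((TensorProduct.quotTensorEquivQuotSMul B m).symm (Submodule.Quotient.mk b))
      ∈ Submodule.span κ {(1 : κ ⊗[A] B)} := by
    rw [hspan]; trivial
  obtain ⟨c, hc⟩ := Submodule.mem_span_singleton.mp hb
  obtain ⟨a, rfl⟩ := Ideal.Quotient.mk_surjective c
  have hc1 : (Ideal.Quotient.mk m a) • (1 : κ ⊗[A] B)
      = (Ideal.Quotient.mk m a) ⊗ₜ[A] (1 : B) := by
    rw [Algebra.TensorProduct.one_def, TensorProduct.smul_tmul', smul_eq_mul, mul_one]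
  have hb2 : Submodule.Quotient.mk b
      = TensorProduct.quotTensorEquivQuotSMul B m ((Ideal.Quotient.mk m a) ⊗ₜ[A] (1 : B)) := by
    rw [← hc1, hc, LinearEquiv.apply_symm_apply]
  rw [TensorProduct.quotTensorEquivQuotSMul_mk_tmul] at hb2
  have hmem : b - a • (1 : B) ∈ m • (⊤ : Submodule A B) := by
    rw [← Submodule.Quotient.eq]
    exact hb2
  have : b = a • (1 : B) + (b - a • (1 : B)) := by ring
  rw [this]
  refine Submodule.add_mem _ (Submodule.mem_sup_left ?_) (Submodule.mem_sup_right hmem)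
  exact ⟨a, by simp [Algebra.smul_def]⟩

theorem statement7 (A : Type*) (B : Type*) [CommRing A] [CommRing B] [Algebra A B]
    (n : ℕ) (hn : 1 ≤ n)
    (h : Nonempty ((Fin n → B) ≃ₗ[A] (Fin n → A))) :
    Function.Bijective (algebraMap A B) ∧ Nonempty (B ≃ₐ[A] A) := by
  obtain ⟨e⟩ := h
  have i0 : Fin n := ⟨0, hn⟩
  -- B is a finite A-module
  have hfin : Module.Finite A B := by
    apply Module.Finite.of_surjective
      ((LinearMap.proj i0 : (Fin n → B) →ₗ[A] B) ∘ₗ e.symm.toLinearMap)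
    exact (Function.surjective_eval i0).comp e.symm.surjective
  -- injectivity
  have hinj : Function.Injective (algebraMap A B) := by
    rw [injective_iff_map_eq_zero]
    intro a ha
    have hsmul : ∀ x : Fin n → B, a • x = 0 := by
      intro x
      funext i
      simp only [Pi.smul_apply, Pi.zero_apply, Algebra.smul_def, ha, zero_mul]
    have := hsmul (e.symm (fun _ => 1))
    have h2 : a • (fun _ => (1 : A)) = (0 : Fin n → A) := by
      have := congrArg e this
      rwa [map_smul, LinearEquiv.apply_symm_apply, map_zero] at this
    have := congrFun h2 i0
    simpa using this
  -- surjectivity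
  have hsurj : Function.Surjective (algebraMap A B) := by
    set N := LinearMap.range (Algebra.linearMap A B) with hNdef
    have hNtop : N = ⊤ := by
      by_contra hne
      -- the ideal of elements killing B/N
      set J : Ideal A := N.colon ⊤ with hJdef
      have hJne : J ≠ ⊤ := by
        intro hJ
        apply hne
        rw [eq_top_iff]
        intro b _
        have : (1 : A) ∈ J := hJ ▸ Submodule.mem_top
        have := Submodule.mem_colon.mp this b (Set.mem_univ b)
        simpa using this
      obtain ⟨M, hM, hJM⟩ := Ideal.exists_le_maximal J hJne
      have hkey := statement7_aux A B n hn e M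
      -- push to the quotient B ⧸ N
      have hle : (⊤ : Submodule A (B ⧸ N)) ≤ M • ⊤ := by
        have := congrArg (Submodule.map N.mkQ) hkey
        rw [Submodule.map_sup, Submodule.map_smul'', Submodule.map_top,
          Submodule.range_mkQ] at this
        have hbot : Submodule.map N.mkQ (LinearMap.range (Algebra.linearMap A B)) = ⊥ := by
          rw [eq_bot_iff]
          rintro x ⟨y, hy, rfl⟩
          exact (Submodule.mem_bot A).mpr ((Submodule.Quotient.mk_eq_zero N).mpr hy)
        rw [hbot, bot_sup_eq] at this
        exact this.ge
      have hfg : (⊤ : Submodule A (B ⧸ N)).FG := Module.finite_def.mp inferInstance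
      obtain ⟨r, hr1, hr0⟩ :=
        Submodule.exists_sub_one_mem_and_smul_eq_zero_of_fg_of_le_smul M ⊤ hfg
          (by simpa using hle)
      have hrJ : r ∈ J := by
        rw [hJdef]
        rw [Submodule.mem_colon]
        intro b _
        have : r • (N.mkQ b) = 0 := hr0 _ Submodule.mem_top
        rw [← map_smul] at this
        rwa [← Submodule.ker_mkQ N, LinearMap.mem_ker]
      have h1M : (1 : A) ∈ M := by
        have : r - (r - 1) = 1 := by ring
        rw [← this]
        exact Submodule.sub_mem _ (hJM hrJ) hr1
      exact hM.ne_top (Ideal.eq_top_of_isUnit_mem _ h1M isUnit_one)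
    intro b
    have : b ∈ N := hNtop ▸ Submodule.mem_top
    obtain ⟨a, ha⟩ := this
    exact ⟨a, ha⟩
  refine ⟨⟨hinj, hsurj⟩, ⟨?_⟩⟩
  exact (AlgEquiv.ofBijective (Algebra.ofId A B) ⟨hinj, hsurj⟩).symm
end
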